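/- arXiv:2604.02267 — 3 statements merged into one kernel-verified Lean document; each statement's English description precedes it below -/
import Mathlib

section
/- Let S=(1,s_2,s_3,...) be a packing sequence and S'=(1,s_2',s_3',...) a packing sequence such that for every i ≥ 2, s_i' ∈ {2⌈(s_i+1)/2⌉ − 1, s_i} (i.e., s_i' = s_i if s_i is odd, and s_i' ∈ {s_i, s_i+1} if s_i is even). Then χ_{S'}(P_n) = χ_S(P_n) for every positive integer n. -/
open SimpleGraph

/-- `IsSPackingColoring G s φ` : `φ` is an `S`-packing coloring of `G` with colors
`Fin k`, where the value `s i` represents the entry `s_{i+1}` of the packing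
sequence `S = (s_1, s_2, …)` (0-indexed encoding), and the color `j : Fin k`
represents color `j+1`: two distinct vertices sharing a color `i` (1-indexed)
must be at distance greater than `s_i`. -/
def IsSPackingColoring {V : Type*} (G : SimpleGraph V) (s : ℕ → ℕ) {k : ℕ}
    (φ : V → Fin k) : Prop :=
  ∀ u v : V, u ≠ v → φ u = φ v → (s (φ u) : ℕ∞) < G.edist u v

/-- The `S`-packing chromatic number of `G`: the least `k` admitting an
`S`-packing `k`-coloring. -/
noncomputable def SPackingChromatic {V : Type*} (G : SimpleGraph V) (s : ℕ → ℕ) : ℕ :=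
  sInf {k | ∃ φ : V → Fin k, IsSPackingColoring G s φ}

/-- `G` is `χ_S`-critical: every proper subgraph has a strictly smaller
`S`-packing chromatic number. -/
def SCritical {V : Type*} (G : SimpleGraph V) (s : ℕ → ℕ) : Prop :=
  ∀ H : G.Subgraph, H ≠ ⊤ → SPackingChromatic H.coe s < SPackingChromatic G s

/-- `G` is `χ_S`-vertex-critical: deleting any vertex strictly decreases the
`S`-packing chromatic number. -/
def SVertexCritical {V : Type*} (G : SimpleGraph V) (s : ℕ → ℕ) : Prop :=
  ∀ v : V, SPackingChromatic (G.induce {u | u ≠ v}) s < SPackingChromatic G s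

lemma pg_walk_le {n : ℕ} : ∀ {u v : Fin n} (p : (pathGraph n).Walk u v),
    max u.val v.val - min u.val v.val ≤ p.length := by
  intro u v p
  induction p with
  | nil => simp
  | cons h q ih =>
    rw [pathGraph_adj] at h
    simp only [Walk.length_cons]
    omega

lemma pg_edist_le {n : ℕ} : ∀ (d : ℕ) (u v : Fin n), u.val + d = v.val →
    (pathGraph n).edist u v ≤ (d : ℕ∞) := by
  intro d
  induction d with
  | zero =>
    intro u v h
    have : u = v := Fin.ext (by omega)
    simp [this]
  | succ d ih =>
    intro u v h
    have hlt : u.val + 1 < n := by have := v.isLt; omega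
    set u' : Fin n := ⟨u.val + 1, by omega⟩ with hu'
    have hadj : (pathGraph n).Adj u u' := by
      rw [pathGraph_adj]; left; rfl
    have h1 : (pathGraph n).edist u u' ≤ 1 := by
      simpa using edist_le hadj.toWalk
    have h2 := ih u' v (by simp [hu']; omega)
    calc (pathGraph n).edist u v ≤ _ + _ := SimpleGraph.edist_triangle (v := u')
      _ ≤ 1 + (d : ℕ∞) := add_le_add h1 h2
      _ = ((d+1 : ℕ) : ℕ∞) := by push_cast; ring

lemma pg_edist {n : ℕ} (u v : Fin n) :
    (pathGraph n).edist u v = ((max u.val v.val - min u.val v.val : ℕ) : ℕ∞) := by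
  apply le_antisymm
  · rcases le_total u.val v.val with h | h
    · have := pg_edist_le (v.val - u.val) u v (by omega)
      simpa [Nat.max_eq_right h, Nat.min_eq_left h] using this
    · have := pg_edist_le (u.val - v.val) v u (by omega)
      rw [edist_comm]
      simpa [Nat.max_eq_left h, Nat.min_eq_right h] using this
  · rw [edist_eq_sInf]
    apply le_sInf
    rintro x ⟨p, rfl⟩
    exact_mod_cast Nat.cast_le.mpr (pg_walk_le p)

/-- A numeric reformulation of the packing-coloring condition on paths. -/
lemma isSPacking_iff {n k : ℕ} (s : ℕ → ℕ) (φ : Fin n → Fin k) :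
    IsSPackingColoring (pathGraph n) s φ ↔
      ∀ u v : Fin n, u.val < v.val → φ u = φ v → s (φ u) < v.val - u.val := by
  constructor
  · intro h u v hlt heq
    have := h u v (fun h' => by subst h'; omega) heq
    rw [pg_edist] at this
    have := ENat.coe_lt_coe.mp this
    omega
  · intro h u v hne heq
    rw [pg_edist]
    rcases Nat.lt_or_ge u.val v.val with hlt | hge
    · have := h u v hlt heq
      exact ENat.coe_lt_coe.mpr (by omega)
    · have hlt : v.val < u.val := by
        rcases Nat.lt_or_ge v.val u.val with h' | h'
        · exact h'
        · exact absurd (Fin.ext (by omega)) hne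
      have := h v u hlt heq.symm
      have h2 : s (φ u).val = s (φ v).val := by rw [heq]
      exact ENat.coe_lt_coe.mpr (by omega)

section Main
variable {n k : ℕ} (s : ℕ → ℕ) (φ : Fin n → Fin k)

/-- In a packing coloring with s 0 = 1, any set of same-0-colored vertices inside
`m` consecutive positions starting at `b` (all with val ≥ b, val < b + m) has ≤ ⌈m/2⌉ elems. -/
lemma zero_count_le {m b : ℕ} (h1 : s 0 = 1)
    (hφ : IsSPackingColoring (pathGraph n) s φ)
    (Z : Finset (Fin n)) (hZ : ∀ j ∈ Z, (φ j).val = 0 ∧ b ≤ j.val ∧ j.val < b + m) :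
    Z.card ≤ (m + 1) / 2 := by
  have hpack := (isSPacking_iff s φ).mp hφ
  have : Z.card ≤ (Finset.range ((m+1)/2)).card := by
    apply Finset.card_le_card_of_injOn (fun j => (j.val - b) / 2)
    · intro j hj
      obtain ⟨_, hb, hm⟩ := hZ j hj
      simp only [Finset.coe_range, Set.mem_Iio, Finset.mem_coe, Finset.mem_range]
      omega
    · intro j hj j' hj' heq
      obtain ⟨hz, hb, hm⟩ := hZ j hj
      obtain ⟨hz', hb', hm'⟩ := hZ j' hj'
      by_contra hne
      have hvne : j.val ≠ j'.val := fun h => hne (Fin.ext h)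
      have h2 : 2 ≤ max j.val j'.val - min j.val j'.val := by
        rcases Nat.lt_or_ge j.val j'.val with hlt | hge
        · have := hpack j j' hlt (Fin.ext (by rw [hz, hz']))
          rw [hz, h1] at this; omega
        · have hlt : j'.val < j.val := by omega
          have := hpack j' j hlt (Fin.ext (by rw [hz, hz']))
          rw [hz', h1] at this; omega
      simp only at heq
      omega
  simpa using this

end Main

lemma card_below {α : Type*} [LinearOrder α] (A : Finset α) (r : Fin A.card) :
    (A.filter (fun j => j < A.orderEmbOfFin rfl r)).card = r.val := by
  classical
  set e := A.orderEmbOfFin rfl with he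
  rw [show r.val = (Finset.Iio r).card by rw [Fin.card_Iio]]
  refine (Finset.card_bij (fun t _ => e t) ?_ ?_ ?_).symm
  · intro t ht
    rw [Finset.mem_filter]
    exact ⟨Finset.orderEmbOfFin_mem A rfl t, e.strictMono (Finset.mem_Iio.mp ht)⟩
  · intro t₁ _ t₂ _ hh
    exact e.injective hh
  · intro j hj
    rw [Finset.mem_filter] at hj
    have : j ∈ Set.range e := by rw [he, Finset.range_orderEmbOfFin]; exact hj.1
    obtain ⟨t, rfl⟩ := this
    exact ⟨t, Finset.mem_Iio.mpr (e.lt_iff_lt.mp hj.2), rfl⟩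

lemma card_between {α : Type*} [LinearOrder α] (A : Finset α) (r r' : Fin A.card)
    (h : r ≤ r') :
    (A.filter (fun j => A.orderEmbOfFin rfl r ≤ j ∧ j < A.orderEmbOfFin rfl r')).card
      = r'.val - r.val := by
  classical
  set e := A.orderEmbOfFin rfl with he
  have h1 := card_below A r
  have h2 := card_below A r'
  rw [← he] at h1 h2
  have hee : e r ≤ e r' := e.monotone h
  have split := Finset.card_filter_add_card_filter_not
      (s := A.filter (fun j => j < e r')) (p := fun j => j < e r)
  have e1 : (A.filter (fun j => j < e r')).filter (fun j => j < e r)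
      = A.filter (fun j => j < e r) := by
    ext j
    simp only [Finset.mem_filter]
    constructor
    · rintro ⟨⟨hA, _⟩, h2⟩; exact ⟨hA, h2⟩
    · rintro ⟨hA, hlt⟩; exact ⟨⟨hA, lt_of_lt_of_le hlt hee⟩, hlt⟩
  have e2 : (A.filter (fun j => j < e r')).filter (fun j => ¬ j < e r)
      = A.filter (fun j => e r ≤ j ∧ j < e r') := by
    ext j
    simp only [Finset.mem_filter, not_lt]
    tauto
  rw [e1, e2] at split
  omega

set_option maxHeartbeats 1000000 in
lemma key {n k : ℕ} (s s' : ℕ → ℕ) (hn : 1 ≤ n) (h1 : s 0 = 1) (h1' : s' 0 = 1)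
    (hrel : ∀ i, 1 ≤ i → s' i < 2 * ((s i + 2) / 2))
    (φ : Fin n → Fin k) (hφ : IsSPackingColoring (pathGraph n) s φ) :
    ∃ ψ : Fin n → Fin k, IsSPackingColoring (pathGraph n) s' ψ := by
  classical
  have hk : 0 < k := (φ ⟨0, hn⟩).pos
  set A : Finset (Fin n) := Finset.univ.filter (fun j => ¬ (φ j).val = 0) with hA
  -- the number of non-zero-colored vertices is at least n / 2
  have hAcard : n / 2 ≤ A.card := by
    have hZ : (Finset.univ.filter (fun j : Fin n => (φ j).val = 0)).card ≤ (n + 1) / 2 := by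
      apply zero_count_le s φ h1 hφ (b := 0) (m := n)
      intro j hj
      rw [Finset.mem_filter] at hj
      exact ⟨hj.2, Nat.zero_le _, by simpa using j.isLt⟩
    have := Finset.card_filter_add_card_filter_not
      (s := (Finset.univ : Finset (Fin n))) (p := fun j => (φ j).val = 0)
    rw [Finset.card_univ, Fintype.card_fin] at this
    rw [← hA] at this
    omega
  set e := A.orderEmbOfFin rfl with he
  have hAmem : ∀ j : Fin n, j ∈ A ↔ ¬ (φ j).val = 0 := by
    intro j
    rw [hA, Finset.mem_filter]
    simp
  have hmem : ∀ t : Fin A.card, (φ (e t)).val ≠ 0 := by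
    intro t
    exact (hAmem _).mp (Finset.orderEmbOfFin_mem A rfl t)
  have hidx : ∀ v : Fin n, ¬ v.val % 2 = 0 → v.val / 2 < A.card := by
    intro v hv
    have := v.isLt
    have : v.val / 2 < n / 2 := by omega
    omega
  set ψ : Fin n → Fin k := fun v =>
    if h : v.val % 2 = 0 then ⟨0, hk⟩ else φ (e ⟨v.val / 2, hidx v h⟩) with hψ
  refine ⟨ψ, (isSPacking_iff s' ψ).mpr ?_⟩
  have hpack := (isSPacking_iff s φ).mp hφ
  intro u v hlt heq
  by_cases hu : u.val % 2 = 0 <;> by_cases hv : v.val % 2 = 0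
  · -- both even : color 0
    have h0 : ψ u = ⟨0, hk⟩ := by rw [hψ]; exact dif_pos hu
    rw [h0]
    simp only [h1']
    omega
  · -- u even, v odd : colors differ, contradiction
    exfalso
    have h0 : ψ u = ⟨0, hk⟩ := by rw [hψ]; exact dif_pos hu
    have h0' : ψ v = φ (e ⟨v.val / 2, hidx v hv⟩) := by rw [hψ]; exact dif_neg hv
    have := hmem ⟨v.val / 2, hidx v hv⟩
    rw [← h0', ← heq, h0] at this
    exact this rfl
  · exfalso
    have h0 : ψ v = ⟨0, hk⟩ := by rw [hψ]; exact dif_pos hv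
    have h0' : ψ u = φ (e ⟨u.val / 2, hidx u hu⟩) := by rw [hψ]; exact dif_neg hu
    have := hmem ⟨u.val / 2, hidx u hu⟩
    rw [← h0', heq, h0] at this
    exact this rfl
  · -- both odd
    set t : Fin A.card := ⟨u.val / 2, hidx u hu⟩ with ht
    set t' : Fin A.card := ⟨v.val / 2, hidx v hv⟩ with ht'
    have h0 : ψ u = φ (e t) := by rw [hψ]; exact dif_neg hu
    have h0' : ψ v = φ (e t') := by rw [hψ]; exact dif_neg hv
    have htt : t < t' := by
      rw [Fin.lt_def]; simp only [ht, ht']; omega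
    have hpq : e t < e t' := e.strictMono htt
    have hpqv : (e t).val < (e t').val := hpq
    have heφ : φ (e t) = φ (e t') := by rw [← h0, ← h0', heq]
    -- old distance
    have hold : s (φ (e t)).val < (e t').val - (e t).val := hpack (e t) (e t') hpqv heφ
    -- count of nonzero colors in the window [e t, e t')
    have hbet := card_between A t t' (le_of_lt htt)
    rw [← he] at hbet
    -- the window as a Finset
    set d : ℕ := (e t').val - (e t).val with hd
    -- zeros in the window, excluding position e t itself
    have hzero : ((Finset.Ico (e t) (e t')).filter (fun j => (φ j).val = 0)).card
        ≤ d / 2 := by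
      have := zero_count_le s φ h1 hφ (b := (e t).val + 1) (m := d - 1)
        ((Finset.Ico (e t) (e t')).filter (fun j => (φ j).val = 0)) ?_
      · omega
      · intro j hj
        rw [Finset.mem_filter, Finset.mem_Ico] at hj
        obtain ⟨⟨hge, hlt'⟩, hz⟩ := hj
        have hge' : (e t).val ≤ j.val := hge
        have hlt'' : j.val < (e t').val := hlt'
        have hne : j.val ≠ (e t).val := by
          intro hh
          exact hmem t (by rw [← Fin.ext hh]; exact hz)
        exact ⟨hz, by omega, by omega⟩
    -- total size of window
    have hIco : (Finset.Ico (e t) (e t')).card = d := by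
      rw [Fin.card_Ico]
    -- the window splits into zeros and nonzeros
    have hsplit := Finset.card_filter_add_card_filter_not
      (s := Finset.Ico (e t) (e t')) (p := fun j => (φ j).val = 0)
    -- nonzeros in window = the "between" set
    have hBeq : (Finset.Ico (e t) (e t')).filter (fun j => ¬ (φ j).val = 0)
        = A.filter (fun j => e t ≤ j ∧ j < e t') := by
      ext j
      simp only [Finset.mem_filter, Finset.mem_Ico, hAmem j]
      constructor
      · rintro ⟨⟨hge, hlt'⟩, hz⟩; exact ⟨hz, hge, hlt'⟩
      · rintro ⟨hz, hge, hlt'⟩; exact ⟨⟨hge, hlt'⟩, hz⟩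
    rw [hBeq] at hsplit
    -- lower bound on index gap
    have hgap : (d + 1) / 2 ≤ t'.val - t.val := by omega
    -- conclude
    rw [h0]
    have hpos : 1 ≤ (φ (e t)).val := Nat.one_le_iff_ne_zero.mpr (hmem t)
    have hs' := hrel (φ (e t)).val hpos
    have huv : v.val - u.val = 2 * (t'.val - t.val) := by
      simp only [ht, ht']
      omega
    omega

theorem stmt4' (s s' : ℕ → ℕ) (hmono : Monotone s) (hpos : ∀ i, 1 ≤ s i)
    (h1 : s 0 = 1)
    (hmono' : Monotone s') (hpos' : ∀ i, 1 ≤ s' i) (h1' : s' 0 = 1)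
    (hrel : ∀ i, 1 ≤ i → s' i = 2 * ((s i + 1 + 1) / 2) - 1 ∨ s' i = s i)
    (n : ℕ) (hn : 1 ≤ n) :
    sInf {k | ∃ φ : Fin n → Fin k, IsSPackingColoring (pathGraph n) s' φ} =
    sInf {k | ∃ φ : Fin n → Fin k, IsSPackingColoring (pathGraph n) s φ} := by
  classical
  have hrel2 : ∀ i, 1 ≤ i → s' i < 2 * ((s i + 2) / 2) := by
    intro i hi
    rcases hrel i hi with h | h <;> omega
  have hle : ∀ i : ℕ, s i ≤ s' i := by
    intro i
    rcases Nat.eq_zero_or_pos i with rfl | hi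
    · rw [h1, h1']
    · rcases hrel i hi with h | h <;> omega
  have hne_s : {k | ∃ φ : Fin n → Fin k, IsSPackingColoring (pathGraph n) s φ}.Nonempty :=
    ⟨n, fun v => v, fun u v hne heq => absurd heq hne⟩
  have hne_s' : {k | ∃ φ : Fin n → Fin k, IsSPackingColoring (pathGraph n) s' φ}.Nonempty :=
    ⟨n, fun v => v, fun u v hne heq => absurd heq hne⟩
  apply le_antisymm
  · obtain ⟨φ, hφ⟩ := Nat.sInf_mem hne_s
    obtain ⟨ψ, hψ⟩ := key s s' hn h1 h1' hrel2 φ hφ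
    exact Nat.sInf_le ⟨ψ, hψ⟩
  · obtain ⟨φ, hφ⟩ := Nat.sInf_mem hne_s'
    refine Nat.sInf_le ⟨φ, ?_⟩
    intro u v hne heq
    exact lt_of_le_of_lt (by exact_mod_cast hle (φ u).val) (hφ u v hne heq)

theorem stmt4 (s s' : ℕ → ℕ) (hmono : Monotone s) (hpos : ∀ i, 1 ≤ s i)
    (h1 : s 0 = 1)
    (hmono' : Monotone s') (hpos' : ∀ i, 1 ≤ s' i) (h1' : s' 0 = 1)
    (hrel : ∀ i, 1 ≤ i → s' i = 2 * ((s i + 1 + 1) / 2) - 1 ∨ s' i = s i)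
    (n : ℕ) (hn : 1 ≤ n) :
    SPackingChromatic (pathGraph n) s' = SPackingChromatic (pathGraph n) s := by
  unfold SPackingChromatic
  exact stmt4' s s' hmono hpos h1 hmono' hpos' h1' hrel n hn
end

section
/- Let S=(1,s_2,s_3,...) be a packing sequence and n a positive integer. If s_i ≥ 2^{i−1} holds for every index i with 2 ≤ i ≤ ⌊log_2 n⌋ + 1, then χ_S(P_n) ≥ ⌊log_2 n⌋ + 1. -/
open SimpleGraph

/-- In any window of `2^k` consecutive positions, one cannot color positions with
colors `< k` such that two positions of the same color `c` are at distance `> 2^c`. -/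
lemma key_window : ∀ (k a : ℕ) (φ : ℕ → ℕ),
    (∀ m, a ≤ m → m < a + 2 ^ k → φ m < k) →
    (∀ x y, a ≤ x → x < y → y < a + 2 ^ k → φ x = φ y → 2 ^ (φ x) < y - x) → False := by
  intro k
  induction k with
  | zero =>
    intro a φ hb _
    exact absurd (hb a le_rfl (by norm_num)) (Nat.not_lt_zero _)
  | succ k ih =>
    intro a φ hb hsep
    have h2 : 2 ^ (k + 1) = 2 ^ k + 2 ^ k := by rw [pow_succ]; ring
    by_cases hex : ∃ p, a ≤ p ∧ p < a + 2 ^ k ∧ φ p = k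
    · obtain ⟨p, hap, hp, hpk⟩ := hex
      apply ih (p + 1) φ
      · intro m hm1 hm2
        have hma : a ≤ m := by omega
        have hmb : m < a + 2 ^ (k + 1) := by omega
        have hlt := hb m hma hmb
        rcases Nat.lt_or_ge (φ m) k with h' | h'
        · exact h'
        · exfalso
          have hmk : φ m = k := by omega
          have := hsep p m hap (by omega) hmb (by rw [hpk, hmk])
          rw [hpk] at this
          omega
      · intro x y hx hxy hy hxyc
        exact hsep x y (by omega) hxy (by omega) hxyc
    · push_neg at hex
      apply ih a φ
      · intro m hm1 hm2
        have h3 := hb m hm1 (by omega)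
        have h4 := hex m hm1 hm2
        omega
      · intro x y hx hxy hy hxyc
        exact hsep x y hx hxy (by omega) hxyc

lemma pathGraph_edist_le' (n : ℕ) : ∀ (d : ℕ) (u v : Fin n), u.val + d = v.val →
    (pathGraph n).edist u v ≤ (d : ℕ∞) := by
  intro d
  induction d with
  | zero =>
    intro u v h
    have : u = v := Fin.ext (by omega)
    simp [this]
  | succ d ih =>
    intro u v h
    have hu1 : u.val + 1 < n := by have := v.isLt; omega
    set u' : Fin n := ⟨u.val + 1, hu1⟩ with hu'
    have hadj : (pathGraph n).Adj u u' := pathGraph_adj.mpr (Or.inl rfl)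
    have h1 : (pathGraph n).edist u u' = 1 := edist_eq_one_iff_adj.mpr hadj
    have h2 := ih u' v (by show u.val + 1 + d = v.val; omega)
    have htri : (pathGraph n).edist u v ≤
        (pathGraph n).edist u u' + (pathGraph n).edist u' v :=
      SimpleGraph.edist_triangle
    rw [h1] at htri
    refine htri.trans ?_
    calc (1 : ℕ∞) + (pathGraph n).edist u' v ≤ 1 + (d : ℕ∞) := add_le_add le_rfl h2
    _ = ((d + 1 : ℕ) : ℕ∞) := by push_cast; ring

theorem stmt10 (s : ℕ → ℕ) (hmono : Monotone s) (hpos : ∀ i, 1 ≤ s i)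
    (h1 : s 0 = 1) (n : ℕ) (hn : 1 ≤ n)
    (h : ∀ i, 2 ≤ i → i ≤ Nat.log 2 n + 1 → 2 ^ (i - 1) ≤ s (i - 1)) :
    Nat.log 2 n + 1 ≤ SPackingChromatic (pathGraph n) s := by
  have hmem : {k | ∃ φ : Fin n → Fin k, IsSPackingColoring (pathGraph n) s φ}.Nonempty :=
    ⟨n, fun v => v, fun u v huv he => absurd he huv⟩
  have hlb : ∀ k ∈ {k | ∃ φ : Fin n → Fin k, IsSPackingColoring (pathGraph n) s φ},
      Nat.log 2 n + 1 ≤ k := by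
    rintro k ⟨φ, hφ⟩
    by_contra hk
    push_neg at hk
    have hklog : k ≤ Nat.log 2 n := by omega
    have h2n : 2 ^ k ≤ n :=
      le_trans (Nat.pow_le_pow_right (by norm_num) hklog) (Nat.pow_log_le_self 2 (by omega))
    apply key_window k 0 (fun m => if hm : m < n then (φ ⟨m, hm⟩).val else 0)
    · intro m _ hm
      have hmn : m < n := by omega
      simp only [dif_pos hmn]
      exact (φ ⟨m, hmn⟩).isLt
    · intro x y _ hxy hy hc
      have hxn : x < n := by omega
      have hyn : y < n := by omega
      simp only [dif_pos hxn, dif_pos hyn] at hc ⊢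
      have hcol : φ ⟨x, hxn⟩ = φ ⟨y, hyn⟩ := Fin.ext hc
      have hne' : (⟨x, hxn⟩ : Fin n) ≠ ⟨y, hyn⟩ := by
        simp only [ne_eq, Fin.mk.injEq]; omega
      have hd := hφ _ _ hne' hcol
      have hdle : (pathGraph n).edist ⟨x, hxn⟩ ⟨y, hyn⟩ ≤ ((y - x : ℕ) : ℕ∞) :=
        pathGraph_edist_le' n (y - x) _ _ (by simp; omega)
      have hlt : (s ((φ ⟨x, hxn⟩ : Fin k) : ℕ) : ℕ∞) < ((y - x : ℕ) : ℕ∞) :=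
        lt_of_lt_of_le hd hdle
      have hs : s ((φ ⟨x, hxn⟩ : Fin k) : ℕ) < y - x := by exact_mod_cast hlt
      have hjk : ((φ ⟨x, hxn⟩ : Fin k) : ℕ) < k := Fin.is_lt _
      have hpw : 2 ^ ((φ ⟨x, hxn⟩ : Fin k) : ℕ) ≤ s ((φ ⟨x, hxn⟩ : Fin k) : ℕ) := by
        rcases Nat.eq_zero_or_pos ((φ ⟨x, hxn⟩ : Fin k) : ℕ) with h0 | h0
        · rw [h0]; simp [h1]
        · have := h (((φ ⟨x, hxn⟩ : Fin k) : ℕ) + 1) (by omega) (by omega)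
          simpa using this
      omega
  exact hlb _ (Nat.sInf_mem hmem)
end

section
/- Let S be a packing sequence with s_1 = 1, s_2 = 3, s_3 = s_4 = 4. If n ≥ 8 can be written as n = 5k + 8m with k,m nonnegative integers, then χ_S(C_n) = 4. -/
open SimpleGraph

/-! ### Auxiliary lemmas -/

lemma fin_sub_val {n : ℕ} (u v : Fin n) :
    (u - v).val = if v.val ≤ u.val then u.val - v.val else u.val + n - v.val := by
  have hu := u.isLt; have hv := v.isLt
  rw [Fin.sub_def]
  simp only [Fin.val_mk]
  split_ifs with h
  · have e : n - v.val + u.val = (u.val - v.val) + n := by omega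
    rw [e, Nat.add_mod_right, Nat.mod_eq_of_lt (by omega : u.val - v.val < n)]
  · rw [Nat.mod_eq_of_lt (by omega)]; omega

open Fin.CommRing in
lemma cycle_edist_le {n : ℕ} (hn : 2 ≤ n) (u v : Fin n) :
    (cycleGraph n).edist u v ≤ ((v - u).val : ℕ∞) := by
  have : NeZero n := ⟨by omega⟩
  have key : ∀ (j : ℕ) (u : Fin n), (cycleGraph n).edist u (u + (j : Fin n)) ≤ (j : ℕ∞) := by
    intro j
    induction j with
    | zero => intro u; simp
    | succ j ih =>
      intro u
      have hadj : (cycleGraph n).Adj (u + (j : Fin n)) (u + ((j+1 : ℕ) : Fin n)) := by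
        rw [cycleGraph_adj']
        right
        have : (u + ((j+1 : ℕ) : Fin n)) - (u + (j : Fin n)) = 1 := by
          push_cast
          ring
        rw [this, Fin.val_one']
        exact Nat.mod_eq_of_lt (by omega)
      calc (cycleGraph n).edist u (u + ((j+1:ℕ) : Fin n))
          ≤ (cycleGraph n).edist u (u + (j : Fin n)) + (cycleGraph n).edist (u + (j : Fin n)) (u + ((j+1:ℕ) : Fin n)) := SimpleGraph.edist_triangle
        _ ≤ (j : ℕ∞) + 1 := by
            gcongr
            · exact ih u
            · rw [edist_eq_one_iff_adj.mpr hadj]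
        _ = ((j+1 : ℕ) : ℕ∞) := by push_cast; ring
  have := key (v - u).val u
  rwa [Fin.cast_val_eq_self, add_sub_cancel] at this

lemma cycle_walk_ge {n : ℕ} : ∀ {u v : Fin n} (p : (cycleGraph n).Walk u v),
    min (u - v).val (v - u).val ≤ p.length := by
  intro u v p
  induction p with
  | nil => simp [fin_sub_val]
  | @cons u w v h q ih =>
    rw [Walk.length_cons]
    rw [cycleGraph_adj'] at h
    have h1 := fin_sub_val u w
    have h2 := fin_sub_val w u
    have h3 := fin_sub_val u v
    have h4 := fin_sub_val v u
    have h5 := fin_sub_val w v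
    have h6 := fin_sub_val v w
    have := u.isLt; have := v.isLt; have := w.isLt
    split_ifs at h1 h2 h3 h4 h5 h6 <;> omega

lemma cycle_edist_ge {n : ℕ} (u v : Fin n) :
    ((min (u - v).val (v - u).val : ℕ) : ℕ∞) ≤ (cycleGraph n).edist u v := by
  rw [SimpleGraph.edist_eq_sInf]
  refine le_sInf ?_
  rintro _ ⟨p, rfl⟩
  show ((min (u - v).val (v - u).val : ℕ) : ℕ∞) ≤ (p.length : ℕ∞)
  exact_mod_cast cycle_walk_ge p

open Fin.CommRing in
lemma packing_card_le {n : ℕ} (d : ℕ) (hd : 1 ≤ d) (hdn : d ≤ n) (A : Finset (Fin n))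
    (h : ∀ x ∈ A, ∀ y ∈ A, x ≠ y → d ≤ min (x - y).val (y - x).val) :
    A.card * d ≤ n := by
  have : NeZero n := ⟨by omega⟩
  have hinj : Set.InjOn (fun p : Fin n × ℕ => p.1 + (p.2 : Fin n))
      (A ×ˢ Finset.range d : Finset (Fin n × ℕ)) := by
    rintro ⟨x, i⟩ hx ⟨y, j⟩ hy hxy
    simp only [Finset.mem_coe, Finset.mem_product, Finset.mem_range] at hx hy
    simp only at hxy
    by_cases hxyeq : x = y
    · subst hxyeq
      have : (i : Fin n) = (j : Fin n) := by exact add_left_cancel hxy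
      have : i % n = j % n := by
        have := congrArg Fin.val this
        simpa [Fin.val_natCast] using this
      rw [Nat.mod_eq_of_lt (by omega), Nat.mod_eq_of_lt (by omega)] at this
      simp [this]
    · exfalso
      have hsub : x - y = (j : Fin n) - (i : Fin n) := by
        have : x + (i : Fin n) = y + (j : Fin n) := hxy
        rw [sub_eq_sub_iff_add_eq_add]
        linear_combination this
      have hsub2 : y - x = (i : Fin n) - (j : Fin n) := by
        rw [sub_eq_sub_iff_add_eq_add]
        linear_combination hxy.symm
      have hmin := h x hx.1 y hy.1 hxyeq
      rw [hsub, hsub2, fin_sub_val, fin_sub_val] at hmin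
      rw [Fin.val_natCast, Fin.val_natCast, Nat.mod_eq_of_lt (by omega),
        Nat.mod_eq_of_lt (by omega)] at hmin
      split_ifs at hmin <;> omega
  calc A.card * d = (A ×ˢ Finset.range d : Finset (Fin n × ℕ)).card := by
        rw [Finset.card_product, Finset.card_range]
    _ ≤ (Finset.univ : Finset (Fin n)).card :=
        Finset.card_le_card_of_injOn _ (fun _ _ => Finset.mem_univ _) hinj
    _ = n := Finset.card_univ.trans (Fintype.card_fin n)

lemma no_three_coloring (s : ℕ → ℕ)
    (h1 : s 0 = 1) (h2 : s 1 = 3) (h3 : s 2 = 4)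
    {n : ℕ} (hn : 8 ≤ n) (φ : Fin n → Fin 3)
    (hφ : IsSPackingColoring (cycleGraph n) s φ) : False := by
  classical
  set A : Fin 3 → Finset (Fin n) := fun c => Finset.univ.filter (fun x => φ x = c) with hA
  have hcard : ∀ c : Fin 3, (A c).card * (s c.val + 1) ≤ n := by
    intro c
    have hscle : s c.val + 1 ≤ n := by
      have : c.val = 0 ∨ c.val = 1 ∨ c.val = 2 := by omega
      rcases this with h | h | h <;> rw [h] <;> omega
    refine packing_card_le _ (by omega) hscle _ ?_
    intro x hx y hy hxy
    simp only [hA, Finset.mem_filter] at hx hy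
    have hlt := hφ x y hxy (hx.2.trans hy.2.symm)
    have le1 := cycle_edist_le (by omega) x y
    have le2 := cycle_edist_le (by omega) y x
    rw [SimpleGraph.edist_comm] at le2
    have : (s (φ x) : ℕ∞) < ((min (x - y).val (y - x).val : ℕ) : ℕ∞) := by
      rcases min_cases (x - y).val (y - x).val with ⟨hm, _⟩ | ⟨hm, _⟩ <;> rw [hm]
      · exact lt_of_lt_of_le hlt le2
      · exact lt_of_lt_of_le hlt le1
    have := (Nat.cast_lt (α := ℕ∞)).mp this
    rw [hx.2] at this
    omega
  have hsum : (Finset.univ : Finset (Fin n)).card = ∑ c : Fin 3, (A c).card :=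
    Finset.card_eq_sum_card_fiberwise (f := φ) (fun x _ => Finset.mem_univ _)
  rw [Finset.card_univ, Fintype.card_fin] at hsum
  rw [Fin.sum_univ_three] at hsum
  have c0 := hcard 0
  have c1 := hcard 1
  have c2 := hcard 2
  simp only [Fin.val_zero, Fin.val_one, Fin.val_two, h1, h2, h3] at c0 c1 c2
  omega

/-- color (0-indexed) of position `a` in the pattern: `k` blocks `1,3,2,1,4`
followed by `m` blocks `1,2,1,3,1,2,1,4`. -/
def cycCol (k a : ℕ) : ℕ :=
  if a < 5 * k then
    (if a % 5 = 1 then 2 else if a % 5 = 2 then 1 else if a % 5 = 4 then 3 else 0)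
  else
    (if (a - 5 * k) % 8 = 1 then 1 else if (a - 5 * k) % 8 = 3 then 2
      else if (a - 5 * k) % 8 = 5 then 1 else if (a - 5 * k) % 8 = 7 then 3 else 0)

lemma cycCol_lt (k a : ℕ) : cycCol k a < 4 := by
  unfold cycCol; split_ifs <;> omega

set_option maxHeartbeats 1000000 in
lemma cycCol_key {n k m : ℕ} (hn : 8 ≤ n) (hkm : n = 5 * k + 8 * m)
    {a b : ℕ} (hab : a < b) (hb : b < n) (h : cycCol k a = cycCol k b) :
    (cycCol k a = 0 → 2 ≤ b - a ∧ b - a + 2 ≤ n) ∧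
    (cycCol k a = 1 → 4 ≤ b - a ∧ b - a + 4 ≤ n) ∧
    (cycCol k a = 2 → 5 ≤ b - a ∧ b - a + 5 ≤ n) ∧
    (cycCol k a = 3 → 5 ≤ b - a ∧ b - a + 5 ≤ n) := by
  unfold cycCol at h ⊢
  split_ifs at h ⊢ <;> refine ⟨?_, ?_, ?_, ?_⟩ <;> intro hc <;>
    first | exact hc.elim | omega

lemma exists_four_coloring (s : ℕ → ℕ)
    (h1 : s 0 = 1) (h2 : s 1 = 3) (h3 : s 2 = 4) (h4 : s 3 = 4)
    {n k m : ℕ} (hn : 8 ≤ n) (hkm : n = 5 * k + 8 * m) :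
    ∃ φ : Fin n → Fin 4, IsSPackingColoring (cycleGraph n) s φ := by
  refine ⟨fun x => ⟨cycCol k x.val, cycCol_lt k x.val⟩, ?_⟩
  have half : ∀ u v : Fin n, u.val < v.val → cycCol k u.val = cycCol k v.val →
      (s (cycCol k u.val) : ℕ∞) < (cycleGraph n).edist u v := by
    intro u v huv hcc
    have hbv := v.isLt
    have hbu := u.isLt
    have key := cycCol_key hn hkm huv hbv hcc
    have hge := cycle_edist_ge u v
    have hlt : s (cycCol k u.val) < min (u - v).val (v - u).val := by
      have h4c : cycCol k u.val < 4 := cycCol_lt k u.val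
      rcases (by omega : cycCol k u.val = 0 ∨ cycCol k u.val = 1 ∨ cycCol k u.val = 2 ∨
          cycCol k u.val = 3) with hc | hc | hc | hc
      · have hb2 := key.1 hc
        rw [hc, h1, fin_sub_val, fin_sub_val]; split_ifs <;> omega
      · have hb2 := key.2.1 hc
        rw [hc, h2, fin_sub_val, fin_sub_val]; split_ifs <;> omega
      · have hb2 := key.2.2.1 hc
        rw [hc, h3, fin_sub_val, fin_sub_val]; split_ifs <;> omega
      · have hb2 := key.2.2.2 hc
        rw [hc, h4, fin_sub_val, fin_sub_val]; split_ifs <;> omega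
    calc (s (cycCol k u.val) : ℕ∞)
        < ((min (u - v).val (v - u).val : ℕ) : ℕ∞) := Nat.cast_lt.mpr hlt
      _ ≤ (cycleGraph n).edist u v := hge
  intro u v hne heq
  have hcc : cycCol k u.val = cycCol k v.val := congrArg Fin.val heq
  show (s (cycCol k u.val) : ℕ∞) < (cycleGraph n).edist u v
  rcases lt_trichotomy u.val v.val with h | h | h
  · exact half u v h hcc
  · exact absurd (Fin.ext h) hne
  · rw [SimpleGraph.edist_comm, hcc]
    exact half v u h hcc.symm

theorem stmt18 (s : ℕ → ℕ) (hmono : Monotone s) (hpos : ∀ i, 1 ≤ s i)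
    (h1 : s 0 = 1) (h2 : s 1 = 3) (h3 : s 2 = 4) (h4 : s 3 = 4)
    (n k m : ℕ) (hn : 8 ≤ n) (hkm : n = 5 * k + 8 * m) :
    SPackingChromatic (cycleGraph n) s = 4 := by
  have hmem : 4 ∈ {j | ∃ φ : Fin n → Fin j, IsSPackingColoring (cycleGraph n) s φ} :=
    exists_four_coloring s h1 h2 h3 h4 hn hkm
  refine le_antisymm (Nat.sInf_le hmem) (le_csInf ⟨4, hmem⟩ ?_)
  rintro j ⟨φ, hφ⟩
  by_contra hj
  have hj3 : j ≤ 3 := by omega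
  have : IsSPackingColoring (cycleGraph n) s (fun x => Fin.castLE hj3 (φ x)) := by
    intro u v hne heq
    have heq' : φ u = φ v := Fin.castLE_injective hj3 heq
    have := hφ u v hne heq'
    simpa [Fin.coe_castLE] using this
  exact no_three_coloring s h1 h2 h3 hn _ this
end
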